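/- Let q be prime, k ≥ 1, and let L be a natural number with 2 ≤ L ≤ q. For g : Fin k → ZMod q let T_L(g) = { x ∈ ZMod q | ∃ i : Fin k → ℕ, i_j < L for all j, and x = ∑_j i_j • g_j }. Then ℙ(|T_L(g)| > q/2) ≥ 1 − 2q/(L^k − 1), where ℙ is over uniform g. -/
import Mathlib

/-- Probability of the event `p` under the uniform measure on a finite type `α`. -/
noncomputable def Pr (α : Type*) (p : α → Prop) : ℝ :=
  (Nat.card {a // p a} : ℝ) / (Nat.card α : ℝ)

open Finset

variable {q : ℕ} {A : Type*} [Fintype A] [AddCommGroup A] [DecidableEq A]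

/-- all fibers of a surjective hom to `ZMod q` have size `card A / q`. -/
lemma fiber_card_mul (φ : A →+ ZMod q) (hq : q.Prime)
    (hs : Function.Surjective φ) (x : ZMod q) :
    (univ.filter (fun a => φ a = x)).card * q = Fintype.card A := by
  haveI : NeZero q := ⟨hq.ne_zero⟩
  classical
  have hfib : ∀ y : ZMod q, (univ.filter (fun a => φ a = y)).card
      = (univ.filter (fun a => φ a = x)).card := by
    intro y
    obtain ⟨ay, hay⟩ := hs y
    obtain ⟨ax, hax⟩ := hs x
    apply Finset.card_bij' (fun a _ => a - ay + ax) (fun a _ => a - ax + ay)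
    · intro a ha
      simp only [mem_filter, mem_univ, true_and] at ha ⊢
      simp [map_add, map_sub, ha, hay, hax]
    · intro a ha
      simp only [mem_filter, mem_univ, true_and] at ha ⊢
      simp [map_add, map_sub, ha, hay, hax]
    · intro a _; abel
    · intro a _; abel
  have h1 : Fintype.card A = ∑ y : ZMod q, (univ.filter (fun a => φ a = y)).card := by
    rw [← Finset.card_univ]
    exact Finset.card_eq_sum_card_fiberwise (fun a _ => mem_univ _)
  rw [h1]
  simp only [hfib]
  rw [Finset.sum_const, Finset.card_univ, ZMod.card, smul_eq_mul, mul_comm]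

lemma fiber_card_mul_le (φ : A →+ ZMod q) (hq : q.Prime) {x : ZMod q} (hx : x ≠ 0) :
    (univ.filter (fun a => φ a = x)).card * q ≤ Fintype.card A := by
  classical
  rcases Finset.eq_empty_or_nonempty (univ.filter (fun a => φ a = x)) with h | ⟨a0, ha0⟩
  · simp [h]
  · simp only [mem_filter, mem_univ, true_and] at ha0
    haveI : Fact q.Prime := ⟨hq⟩
    have hs : Function.Surjective φ := by
      intro y
      refine ⟨(y * x⁻¹).val • a0, ?_⟩
      rw [map_nsmul, ha0, nsmul_eq_mul, ZMod.natCast_val, ZMod.cast_id,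
        mul_assoc, inv_mul_cancel₀ hx, mul_one]
    exact le_of_eq (fiber_card_mul φ hq hs x)
open Finset

section LF
variable {q k : ℕ} [NeZero q]

/-- The linear functional `g ↦ ∑ j, a j * g j` as an `AddMonoidHom`. -/
def lf (a : Fin k → ZMod q) : (Fin k → ZMod q) →+ ZMod q where
  toFun g := ∑ j, a j * g j
  map_zero' := by simp
  map_add' g h := by
    simp only [Pi.add_apply, mul_add]
    rw [Finset.sum_add_distrib]

lemma lf_apply (a g : Fin k → ZMod q) : lf a g = ∑ j, a j * g j := rfl

lemma lf_sub (a b g : Fin k → ZMod q) : lf (a - b) g = lf a g - lf b g := by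
  simp only [lf_apply, Pi.sub_apply, sub_mul]
  rw [Finset.sum_sub_distrib]

lemma lf_surj (hq : q.Prime) {a : Fin k → ZMod q} (ha : a ≠ 0) :
    Function.Surjective (lf a) := by
  haveI : Fact q.Prime := ⟨hq⟩
  obtain ⟨j0, hj0⟩ : ∃ j0, a j0 ≠ 0 := by
    by_contra h; push_neg at h; exact ha (funext h)
  intro y
  refine ⟨Pi.single j0 ((a j0)⁻¹ * y), ?_⟩
  rw [lf_apply, Finset.sum_eq_single j0]
  · rw [Pi.single_eq_same, ← mul_assoc, mul_inv_cancel₀ hj0, one_mul]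
  · intro j _ hj; rw [Pi.single_eq_of_ne hj, mul_zero]
  · intro h; exact absurd (Finset.mem_univ j0) h

/-- single-constraint exact count -/
lemma count_single (hq : q.Prime) {a : Fin k → ZMod q} (ha : a ≠ 0) (x : ZMod q) :
    (univ.filter (fun g : Fin k → ZMod q => lf a g = x)).card * q = q ^ k := by
  have := fiber_card_mul (lf a) hq (lf_surj hq ha) x
  rwa [Fintype.card_fun, ZMod.card, Fintype.card_fin] at this

/-- two-constraint count bound -/
lemma count_pair (hq : q.Prime) {a b : Fin k → ZMod q} (hab : a ≠ b)
    {x : ZMod q} (hx : x ≠ 0) :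
    (univ.filter (fun g : Fin k → ZMod q => lf a g = x ∧ lf b g = x)).card * q * q
      ≤ q ^ k := by
  classical
  set K := (lf (a - b)).ker with hK
  have hKcard : Fintype.card K * q = q ^ k := by
    have h0 : (univ.filter (fun g : Fin k → ZMod q => lf (a - b) g = 0)).card
        = Fintype.card K := by
      rw [← Fintype.card_subtype]
      exact Fintype.card_congr (Equiv.subtypeEquivRight (fun g => AddMonoidHom.mem_ker.symm))
    rw [← h0]
    exact count_single hq (sub_ne_zero.mpr hab) 0
  have hiff : ∀ g : Fin k → ZMod q, (lf a g = x ∧ lf b g = x) ↔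
      (lf a g = x ∧ lf (a - b) g = 0) := by
    intro g
    rw [lf_sub]
    constructor
    · rintro ⟨h1, h2⟩; exact ⟨h1, by rw [h1, h2, sub_self]⟩
    · rintro ⟨h1, h2⟩
      refine ⟨h1, ?_⟩
      rw [h1] at h2
      linear_combination (norm := abel) -h2
  have hcardeq : (univ.filter (fun g : Fin k → ZMod q => lf a g = x ∧ lf b g = x)).card
      = (univ.filter (fun g : K => (lf a).comp K.subtype g = x)).card := by
    rw [← Fintype.card_subtype, ← Fintype.card_subtype]
    apply Fintype.card_congr
    refine ⟨fun g => ⟨⟨g.1, ?_⟩, ?_⟩, fun g => ⟨g.1.1, ?_⟩, ?_, ?_⟩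
    · exact AddMonoidHom.mem_ker.mpr ((hiff g.1).mp g.2).2
    · exact ((hiff g.1).mp g.2).1
    · exact (hiff g.1.1).mpr ⟨g.2, AddMonoidHom.mem_ker.mp g.1.2⟩
    · intro g; rfl
    · intro g; rfl
  rw [hcardeq]
  calc (univ.filter (fun g : K => (lf a).comp K.subtype g = x)).card * q * q
      ≤ Fintype.card K * q :=
        Nat.mul_le_mul_right q (fiber_card_mul_le ((lf a).comp K.subtype) hq hx)
    _ = q ^ k := hKcard

end LF
section Main

/-- coefficient vector in `ZMod q` attached to `i : Fin k → ℕ`. -/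
def cvec (q : ℕ) {k : ℕ} (i : Fin k → ℕ) : Fin k → ZMod q := fun j => (i j : ZMod q)

@[simp] lemma cvec_apply (q : ℕ) {k : ℕ} (i : Fin k → ℕ) (j : Fin k) :
    cvec q i j = (i j : ZMod q) := rfl

set_option maxHeartbeats 1000000 in
open scoped Classical in
/-- For every target `x`, the number of `g` that fail to represent `x` is small. -/
lemma badx_bound {q k L : ℕ} [NeZero q] (hq : Nat.Prime q) (hk : 1 ≤ k)
    (hL2 : 2 ≤ L) (hLq : L ≤ q) (x : ZMod q) :
    ((univ.filter fun g : Fin k → ZMod q =>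
        ¬ ∃ i : Fin k → ℕ, (∀ j, i j < L) ∧ x = ∑ j, (i j) • g j).card : ℝ)
      * ((L : ℝ) ^ k - 1) ≤ (q : ℝ) ^ (k + 1) := by
  classical
  have hq0 : (0:ℝ) < (q:ℝ) := by exact_mod_cast hq.pos
  have hM1 : (1:ℝ) ≤ (L : ℝ) ^ k - 1 := by
    have : (2:ℝ) ≤ (L:ℝ) ^ k := by
      calc (2:ℝ) = 2 ^ 1 := by norm_num
      _ ≤ (2:ℝ) ^ k := by
          apply pow_le_pow_right₀ (by norm_num) hk
      _ ≤ (L:ℝ) ^ k := by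
          apply pow_le_pow_left₀ (by norm_num)
          exact_mod_cast hL2
    linarith
  by_cases hx : x = 0
  · have hempty : (univ.filter fun g : Fin k → ZMod q =>
        ¬ ∃ i : Fin k → ℕ, (∀ j, i j < L) ∧ x = ∑ j, (i j) • g j) = ∅ := by
      apply Finset.filter_eq_empty_iff.mpr
      intro g _
      push_neg
      exact ⟨fun _ => 0, fun j => by show 0 < L; omega, by simp [hx]⟩
    rw [hempty]
    simp only [Finset.card_empty, Nat.cast_zero, zero_mul]
    positivity
  -- main case x ≠ 0
  set Q : ℝ := (q : ℝ) with hQ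
  set M : ℝ := (L : ℝ) ^ k with hM
  set D' : Finset (Fin k → ℕ) :=
    (Fintype.piFinset fun _ : Fin k => Finset.range L).erase 0 with hD'
  have hmemD' : ∀ i : Fin k → ℕ, i ∈ D' ↔ i ≠ 0 ∧ ∀ j, i j < L := by
    intro i
    simp [hD', Fintype.mem_piFinset, Finset.mem_range]
  have h0mem : (0 : Fin k → ℕ) ∈ (Fintype.piFinset fun _ : Fin k => Finset.range L) := by
    simp [Fintype.mem_piFinset, Finset.mem_range]; omega
  have hD'card : (D'.card : ℝ) = M - 1 := by
    rw [hD', Finset.card_erase_of_mem h0mem]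
    have hc : (Fintype.piFinset fun _ : Fin k => Finset.range L).card = L ^ k := by
      rw [Fintype.card_piFinset]
      simp [Finset.card_range]
    rw [hc]
    have h1 : 1 ≤ L ^ k := Nat.one_le_pow _ _ (by omega)
    push_cast [Nat.cast_sub h1]
    rfl
  have hval : ∀ i : Fin k → ℕ, (∀ j, i j < L) → ∀ j, ((i j : ZMod q)).val = i j := by
    intro i hi j
    exact ZMod.val_cast_of_lt (lt_of_lt_of_le (hi j) hLq)
  have hne0 : ∀ i ∈ D', cvec q i ≠ 0 := by
    intro i hi
    obtain ⟨hi0, hiL⟩ := (hmemD' i).mp hi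
    obtain ⟨j, hj⟩ : ∃ j, i j ≠ 0 := by
      by_contra h; push_neg at h; exact hi0 (funext h)
    intro hc
    have h2 : ((i j : ZMod q)) = 0 := by simpa using congrFun hc j
    apply hj
    rw [← hval i hiL j, h2, ZMod.val_zero]
  have hinj : ∀ i ∈ D', ∀ i' ∈ D', cvec q i = cvec q i' → i = i' := by
    intro i hi i' hi' hc
    funext j
    have h2 : ((i j : ZMod q)) = ((i' j : ZMod q)) := by simpa using congrFun hc j
    rw [← hval i ((hmemD' i).mp hi).2 j, ← hval i' ((hmemD' i').mp hi').2 j, h2]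
  -- the counting function
  set Nx : (Fin k → ZMod q) → ℕ :=
    fun g => (D'.filter fun i => lf (cvec q i) g = x).card with hNx
  -- membership translation
  have htrans : ∀ g : Fin k → ZMod q,
      (¬ ∃ i : Fin k → ℕ, (∀ j, i j < L) ∧ x = ∑ j, (i j) • g j) ↔ Nx g = 0 := by
    intro g
    rw [hNx]
    simp only [Finset.card_eq_zero, Finset.filter_eq_empty_iff]
    constructor
    · intro h i hi hlf
      refine h ⟨i, ((hmemD' i).mp hi).2, ?_⟩
      rw [← hlf, lf_apply]
      exact Finset.sum_congr rfl (fun j _ => (nsmul_eq_mul _ _).symm)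
    · rintro h ⟨i, hiL, hsum⟩
      have hi0 : i ≠ 0 := by
        rintro rfl
        apply hx
        simpa using hsum
      refine h ((hmemD' i).mpr ⟨hi0, hiL⟩) ?_
      rw [lf_apply, hsum]
      exact Finset.sum_congr rfl (fun j _ => (nsmul_eq_mul _ _).symm)
  -- fiber counts
  have hfibR : ∀ i ∈ D',
      (((univ.filter fun g : Fin k → ZMod q => lf (cvec q i) g = x).card : ℝ))
        = Q ^ k / Q := by
    intro i hi
    have h := count_single (k := k) hq (hne0 i hi) x
    have : (((univ.filter fun g : Fin k → ZMod q => lf (cvec q i) g = x).card : ℝ)) * Q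
        = Q ^ k := by rw [hQ]; exact_mod_cast congrArg (Nat.cast : ℕ → ℝ) h
    field_simp at this ⊢
    linarith [this]
  have hpairR : ∀ i ∈ D', ∀ i' ∈ D', i ≠ i' →
      (((univ.filter fun g : Fin k → ZMod q =>
          lf (cvec q i) g = x ∧ lf (cvec q i') g = x).card : ℝ))
        ≤ Q ^ k / (Q * Q) := by
    intro i hi i' hi' hii'
    have hab : cvec q i ≠ cvec q i' := fun h => hii' (hinj i hi i' hi' h)
    have h := count_pair (k := k) hq hab hx
    have h2 : (((univ.filter fun g : Fin k → ZMod q =>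
        lf (cvec q i) g = x ∧ lf (cvec q i') g = x).card : ℝ)) * Q * Q ≤ Q ^ k := by
      rw [hQ]; exact_mod_cast h
    rw [le_div_iff₀ (by positivity)]
    linarith [h2]
  -- first moment
  have hS1N : ∑ g : Fin k → ZMod q, Nx g
      = ∑ i ∈ D', (univ.filter fun g : Fin k → ZMod q => lf (cvec q i) g = x).card := by
    simp only [hNx, Finset.card_filter]
    exact Finset.sum_comm
  have hS1 : ∑ g : Fin k → ZMod q, (Nx g : ℝ) = (M - 1) * (Q ^ k / Q) := by
    calc ∑ g : Fin k → ZMod q, (Nx g : ℝ)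
        = ∑ i ∈ D',
            (((univ.filter fun g : Fin k → ZMod q => lf (cvec q i) g = x).card : ℝ)) := by
          exact_mod_cast congrArg (Nat.cast : ℕ → ℝ) hS1N
      _ = ∑ _i ∈ D', Q ^ k / Q := Finset.sum_congr rfl hfibR
      _ = (M - 1) * (Q ^ k / Q) := by
          rw [Finset.sum_const, nsmul_eq_mul, hD'card]
  -- second moment
  have hS2N : ∑ g : Fin k → ZMod q, Nx g * Nx g
      = ∑ i ∈ D', ∑ i' ∈ D',
          (univ.filter fun g : Fin k → ZMod q =>
            lf (cvec q i) g = x ∧ lf (cvec q i') g = x).card := by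
    have expand : ∀ g : Fin k → ZMod q, Nx g * Nx g
        = ∑ i ∈ D', ∑ i' ∈ D',
            (if lf (cvec q i) g = x ∧ lf (cvec q i') g = x then 1 else 0) := by
      intro g
      rw [hNx]
      simp only [Finset.card_filter]
      rw [Finset.sum_mul_sum]
      refine Finset.sum_congr rfl (fun i _ => Finset.sum_congr rfl (fun i' _ => ?_))
      by_cases h1 : lf (cvec q i) g = x <;> by_cases h2 : lf (cvec q i') g = x <;>
        simp [h1, h2]
    calc ∑ g : Fin k → ZMod q, Nx g * Nx g
        = ∑ g : Fin k → ZMod q, ∑ i ∈ D', ∑ i' ∈ D',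
            (if lf (cvec q i) g = x ∧ lf (cvec q i') g = x then 1 else 0) :=
          Finset.sum_congr rfl (fun g _ => expand g)
      _ = ∑ i ∈ D', ∑ g : Fin k → ZMod q, ∑ i' ∈ D',
            (if lf (cvec q i) g = x ∧ lf (cvec q i') g = x then 1 else 0) :=
          Finset.sum_comm
      _ = ∑ i ∈ D', ∑ i' ∈ D', ∑ g : Fin k → ZMod q,
            (if lf (cvec q i) g = x ∧ lf (cvec q i') g = x then 1 else 0) :=
          Finset.sum_congr rfl (fun i _ => Finset.sum_comm)
      _ = ∑ i ∈ D', ∑ i' ∈ D',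
            (univ.filter fun g : Fin k → ZMod q =>
              lf (cvec q i) g = x ∧ lf (cvec q i') g = x).card := by
          refine Finset.sum_congr rfl (fun i _ => Finset.sum_congr rfl (fun i' _ => ?_))
          rw [Finset.card_filter]
  have hS2 : ∑ g : Fin k → ZMod q, (Nx g : ℝ) ^ 2
      ≤ (M - 1) * (Q ^ k / Q) + ((M - 1) * (M - 1)) * (Q ^ k / (Q * Q)) := by
    have hcast : ∑ g : Fin k → ZMod q, (Nx g : ℝ) ^ 2
        = ∑ i ∈ D', ∑ i' ∈ D',
            (((univ.filter fun g : Fin k → ZMod q =>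
              lf (cvec q i) g = x ∧ lf (cvec q i') g = x).card : ℝ)) := by
      have := congrArg (Nat.cast : ℕ → ℝ) hS2N
      push_cast at this
      simpa [sq] using this
    rw [hcast]
    have hbound : ∀ i ∈ D',
        (∑ i' ∈ D', (((univ.filter fun g : Fin k → ZMod q =>
          lf (cvec q i) g = x ∧ lf (cvec q i') g = x).card : ℝ)))
          ≤ Q ^ k / Q + (M - 1) * (Q ^ k / (Q * Q)) := by
      intro i hi
      rw [← Finset.add_sum_erase _ _ hi]
      gcongr ?_ + ?_
      · have : (univ.filter fun g : Fin k → ZMod q =>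
            lf (cvec q i) g = x ∧ lf (cvec q i) g = x)
            = (univ.filter fun g : Fin k → ZMod q => lf (cvec q i) g = x) := by
          apply Finset.filter_congr
          intro g _
          simp
        rw [this, hfibR i hi]
      · calc ∑ i' ∈ D'.erase i, (((univ.filter fun g : Fin k → ZMod q =>
              lf (cvec q i) g = x ∧ lf (cvec q i') g = x).card : ℝ))
            ≤ ∑ i' ∈ D'.erase i, Q ^ k / (Q * Q) := by
              refine Finset.sum_le_sum (fun i' hi' => ?_)
              exact hpairR i hi i' (Finset.mem_of_mem_erase hi')
                (fun h => (Finset.ne_of_mem_erase hi') h.symm)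
          _ = ((D'.erase i).card : ℝ) * (Q ^ k / (Q * Q)) := by
              rw [Finset.sum_const, nsmul_eq_mul]
          _ ≤ (M - 1) * (Q ^ k / (Q * Q)) := by
              apply mul_le_mul_of_nonneg_right _ (by positivity)
              rw [← hD'card]
              exact_mod_cast Finset.card_le_card (Finset.erase_subset _ _)
    calc ∑ i ∈ D', ∑ i' ∈ D', (((univ.filter fun g : Fin k → ZMod q =>
          lf (cvec q i) g = x ∧ lf (cvec q i') g = x).card : ℝ))
        ≤ ∑ _i ∈ D', (Q ^ k / Q + (M - 1) * (Q ^ k / (Q * Q))) :=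
          Finset.sum_le_sum hbound
      _ = (M - 1) * (Q ^ k / Q + (M - 1) * (Q ^ k / (Q * Q))) := by
          rw [Finset.sum_const, nsmul_eq_mul, hD'card]
      _ = (M - 1) * (Q ^ k / Q) + ((M - 1) * (M - 1)) * (Q ^ k / (Q * Q)) := by ring
  -- Chebyshev
  set μ : ℝ := (M - 1) / Q with hμ
  set badset : Finset (Fin k → ZMod q) := univ.filter (fun g => Nx g = 0) with hbadset
  have hcheb : (badset.card : ℝ) * μ ^ 2 ≤ (M - 1) * (Q ^ k / Q) := by
    have hvar : (badset.card : ℝ) * μ ^ 2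
        ≤ ∑ g : Fin k → ZMod q, ((Nx g : ℝ) - μ) ^ 2 := by
      calc (badset.card : ℝ) * μ ^ 2 = ∑ _g ∈ badset, μ ^ 2 := by
            rw [Finset.sum_const, nsmul_eq_mul]
        _ = ∑ g ∈ badset, ((Nx g : ℝ) - μ) ^ 2 := by
            refine Finset.sum_congr rfl (fun g hg => ?_)
            rw [hbadset, Finset.mem_filter] at hg
            rw [hg.2]
            ring_nf
        _ ≤ ∑ g : Fin k → ZMod q, ((Nx g : ℝ) - μ) ^ 2 :=
            Finset.sum_le_sum_of_subset_of_nonneg (Finset.subset_univ _)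
              (fun _ _ _ => sq_nonneg _)
    have hcardG : ((Finset.univ : Finset (Fin k → ZMod q)).card : ℝ) = Q ^ k := by
      rw [Finset.card_univ, Fintype.card_fun, ZMod.card, Fintype.card_fin]
      push_cast
      rfl
    have hexp : ∑ g : Fin k → ZMod q, ((Nx g : ℝ) - μ) ^ 2
        = (∑ g : Fin k → ZMod q, (Nx g : ℝ) ^ 2) - 2 * μ * (∑ g : Fin k → ZMod q, (Nx g : ℝ))
          + Q ^ k * μ ^ 2 := by
      have : ∀ g : Fin k → ZMod q, ((Nx g : ℝ) - μ) ^ 2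
          = (Nx g : ℝ) ^ 2 - 2 * μ * (Nx g : ℝ) + μ ^ 2 := fun g => by ring
      rw [Finset.sum_congr rfl (fun g _ => this g), Finset.sum_add_distrib,
        Finset.sum_sub_distrib, ← Finset.mul_sum, Finset.sum_const, nsmul_eq_mul, hcardG]
    have key : (∑ g : Fin k → ZMod q, (Nx g : ℝ) ^ 2)
          - 2 * μ * (∑ g : Fin k → ZMod q, (Nx g : ℝ)) + Q ^ k * μ ^ 2
        ≤ (M - 1) * (Q ^ k / Q) := by
      rw [hS1]
      have hQne : Q ≠ 0 := ne_of_gt hq0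
      have hgoal : (M - 1) * (Q ^ k / Q) + ((M - 1) * (M - 1)) * (Q ^ k / (Q * Q))
          - 2 * μ * ((M - 1) * (Q ^ k / Q)) + Q ^ k * μ ^ 2 = (M - 1) * (Q ^ k / Q) := by
        rw [hμ]
        ring
      linarith [hS2]
    linarith [hvar, hexp ▸ key]
  -- conclude
  have hbadfinal : (badset.card : ℝ) * (M - 1) ≤ Q ^ (k + 1) := by
    have h3 : (0:ℝ) < M - 1 := by linarith
    have hQne : Q ≠ 0 := ne_of_gt hq0
    have h2 : (badset.card : ℝ) * (M - 1) ^ 2 ≤ (M - 1) * Q ^ k * Q := by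
      have hmul := mul_le_mul_of_nonneg_right hcheb (le_of_lt (mul_pos hq0 hq0))
      rw [hμ] at hmul
      have l1 : (badset.card : ℝ) * ((M - 1) / Q) ^ 2 * (Q * Q)
          = (badset.card : ℝ) * (M - 1) ^ 2 := by
        rw [div_pow, mul_assoc, ← pow_two Q, div_mul_cancel₀ _ (pow_ne_zero 2 hQne)]
      have l2 : (M - 1) * (Q ^ k / Q) * (Q * Q) = (M - 1) * Q ^ k * Q := by
        rw [mul_assoc (M - 1), ← mul_assoc (Q ^ k / Q), div_mul_cancel₀ _ hQne,
          ← mul_assoc]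
      rw [l1, l2] at hmul
      exact hmul
    rw [pow_succ]
    nlinarith [h2, h3, (show (0:ℝ) ≤ (badset.card : ℝ) from Nat.cast_nonneg _), pow_pos hq0 k]
  -- identify the two filters
  have hfilter : (univ.filter fun g : Fin k → ZMod q =>
      ¬ ∃ i : Fin k → ℕ, (∀ j, i j < L) ∧ x = ∑ j, (i j) • g j) = badset := by
    rw [hbadset]
    exact Finset.filter_congr (fun g _ => by rw [htrans g])
  rw [hfilter]
  exact hbadfinal

end Main

set_option maxHeartbeats 1000000 in
/-- For `q` prime, `k ≥ 1` and `2 ≤ L ≤ q`, with probability at least `1 - 2q/(L^k - 1)`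
over uniform `g : Fin k → ZMod q`, more than `q/2` elements `x` of `ZMod q` can be written
as `x = ∑ j, i j • g j` with all `i j < L`. -/
theorem prob_large_reachable_set (q k : ℕ) (hq : Nat.Prime q) (hk : 1 ≤ k)
    (L : ℕ) (hL2 : 2 ≤ L) (hLq : L ≤ q) :
    1 - 2 * (q : ℝ) / ((L : ℝ) ^ k - 1)
      ≤ Pr (Fin k → ZMod q)
          (fun g => (q : ℝ) / 2 <
            (Nat.card {x : ZMod q |
              ∃ i : Fin k → ℕ, (∀ j, i j < L) ∧ x = ∑ j, (i j) • g j} : ℝ)) := by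
  classical
  haveI : NeZero q := ⟨hq.ne_zero⟩
  have hq0 : (0:ℝ) < (q:ℝ) := by exact_mod_cast hq.pos
  set Q : ℝ := (q : ℝ) with hQ
  set M : ℝ := (L : ℝ) ^ k with hM
  have hM1 : (1:ℝ) ≤ M - 1 := by
    have : (2:ℝ) ≤ (L:ℝ) ^ k := by
      calc (2:ℝ) = 2 ^ 1 := by norm_num
      _ ≤ (2:ℝ) ^ k := by apply pow_le_pow_right₀ (by norm_num) hk
      _ ≤ (L:ℝ) ^ k := by
          apply pow_le_pow_left₀ (by norm_num)
          exact_mod_cast hL2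
    rw [hM]; linarith
  have hM0 : (0:ℝ) < M - 1 := by linarith
  have hQk : (0:ℝ) < Q ^ k := pow_pos hq0 k
  -- the per-x property
  set p : (Fin k → ZMod q) → ZMod q → Prop :=
    fun g x => ∃ i : Fin k → ℕ, (∀ j, i j < L) ∧ x = ∑ j, (i j) • g j with hp
  -- number of reachable x
  set T : (Fin k → ZMod q) → ℕ := fun g => (univ.filter (p g)).card with hT
  set m : (Fin k → ZMod q) → ℕ := fun g => (univ.filter fun x => ¬ p g x).card with hm
  have hTm : ∀ g, T g + m g = q := by
    intro g
    rw [hT, hm]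
    rw [Finset.card_filter_add_card_filter_not]
    rw [Finset.card_univ, ZMod.card]
  -- Nat.card as a filter card
  have hNcard : ∀ g : Fin k → ZMod q,
      (Nat.card {x : ZMod q | p g x} : ℝ) = (T g : ℝ) := by
    intro g
    congr 1
    rw [Nat.card_eq_fintype_card, hT, ← Set.toFinset_card]
    congr 1
    ext x
    simp [Set.mem_toFinset]
  -- the bad set
  set B : Finset (Fin k → ZMod q) :=
    univ.filter (fun g => ¬ (Q / 2 < (T g : ℝ))) with hB
  -- bound on sum of missing counts
  have hswap : ∑ g : Fin k → ZMod q, m g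
      = ∑ x : ZMod q, (univ.filter fun g : Fin k → ZMod q => ¬ p g x).card := by
    simp only [hm, Finset.card_filter]
    exact Finset.sum_comm
  have hmiss : ∑ g : Fin k → ZMod q, (m g : ℝ) ≤ Q * (Q ^ (k + 1) / (M - 1)) := by
    calc ∑ g : Fin k → ZMod q, (m g : ℝ)
        = ∑ x : ZMod q, ((univ.filter fun g : Fin k → ZMod q => ¬ p g x).card : ℝ) := by
          exact_mod_cast congrArg (Nat.cast : ℕ → ℝ) hswap
      _ ≤ ∑ _x : ZMod q, Q ^ (k + 1) / (M - 1) := by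
          refine Finset.sum_le_sum (fun x _ => ?_)
          rw [le_div_iff₀ hM0]
          exact badx_bound hq hk hL2 hLq x
      _ = Q * (Q ^ (k + 1) / (M - 1)) := by
          rw [Finset.sum_const, nsmul_eq_mul, Finset.card_univ, ZMod.card]
  -- bad set bound
  have hBbound : (B.card : ℝ) * (Q / 2) ≤ Q * (Q ^ (k + 1) / (M - 1)) := by
    calc (B.card : ℝ) * (Q / 2) = ∑ _g ∈ B, Q / 2 := by
          rw [Finset.sum_const, nsmul_eq_mul]
      _ ≤ ∑ g ∈ B, (m g : ℝ) := by
          refine Finset.sum_le_sum (fun g hg => ?_)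
          rw [hB, Finset.mem_filter] at hg
          have hTle : (T g : ℝ) ≤ Q / 2 := le_of_not_gt hg.2
          have : (T g : ℝ) + (m g : ℝ) = Q := by
            rw [hQ]; exact_mod_cast congrArg (Nat.cast : ℕ → ℝ) (hTm g)
          linarith
      _ ≤ ∑ g : Fin k → ZMod q, (m g : ℝ) :=
          Finset.sum_le_sum_of_subset_of_nonneg (Finset.subset_univ _)
            (fun g _ _ => Nat.cast_nonneg _)
      _ ≤ Q * (Q ^ (k + 1) / (M - 1)) := hmiss
  have hkey : (B.card : ℝ) * (M - 1) ≤ 2 * (Q ^ k * Q) := by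
    have h1 : (B.card : ℝ) * (Q / 2) * (M - 1) ≤ Q * (Q ^ k * Q) := by
      have := mul_le_mul_of_nonneg_right hBbound (le_of_lt hM0)
      rwa [mul_assoc Q, div_mul_cancel₀ _ (ne_of_gt hM0), pow_succ] at this
    nlinarith [h1, hq0, hM0, (show (0:ℝ) ≤ (B.card : ℝ) from Nat.cast_nonneg _)]
  -- compute the probability
  have hcardG : Nat.card (Fin k → ZMod q) = q ^ k := by
    rw [Nat.card_eq_fintype_card, Fintype.card_fun, ZMod.card, Fintype.card_fin]
  have hgood : (Nat.card {g : Fin k → ZMod q // Q / 2 < ((Nat.card {x : ZMod q | p g x}) : ℝ)} : ℝ)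
      = (q : ℝ) ^ k - (B.card : ℝ) := by
    have h1 : Nat.card {g : Fin k → ZMod q // Q / 2 < ((Nat.card {x : ZMod q | p g x}) : ℝ)}
        = (univ.filter (fun g : Fin k → ZMod q => Q / 2 < (T g : ℝ))).card := by
      rw [Nat.card_eq_fintype_card, Fintype.card_subtype]
      congr 1
      apply Finset.filter_congr
      intro g _
      rw [hNcard g]
    have h2 : (univ.filter (fun g : Fin k → ZMod q => Q / 2 < (T g : ℝ))).card + B.card
        = q ^ k := by
      rw [hB, Finset.card_filter_add_card_filter_not, Finset.card_univ,
        Fintype.card_fun, ZMod.card, Fintype.card_fin]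
    rw [h1]
    have := congrArg (Nat.cast : ℕ → ℝ) h2
    push_cast at this
    linarith
  rw [Pr, hcardG]
  have hgood' : (Nat.card {g : Fin k → ZMod q //
      (q:ℝ) / 2 < ((Nat.card {x : ZMod q |
        ∃ i : Fin k → ℕ, (∀ j, i j < L) ∧ x = ∑ j, (i j) • g j}) : ℝ)} : ℝ)
      = (q : ℝ) ^ k - (B.card : ℝ) := hgood
  rw [hgood']
  have hqk : ((q ^ k : ℕ) : ℝ) = Q ^ k := by push_cast; rfl
  rw [hqk]
  rw [sub_div, div_self (ne_of_gt hQk)]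
  have hfrac : (B.card : ℝ) / Q ^ k ≤ 2 * Q / (M - 1) := by
    rw [div_le_div_iff₀ hQk hM0]
    nlinarith [hkey]
  rw [hM] at hfrac ⊢
  linarith [hfrac]
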